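/- Let P₀ be the Veronese rank-1 projector family on ℂP², P₀ = (1/(1+|ξ|²)²)·v⊗v† with v = (1, √2 ξ, ξ²)ᵀ, ξ = ξ₁+iξ₂. Then the Lagrangian density L(P₀) = tr((∂₊P₀)(∂₋P₀)) equals 2/(1+|ξ|²)², and its integral over ℝ² (the action) equals 2π. -/

import Mathlib

open Matrix

/-- Entrywise partial derivative of a matrix family in the first real coordinate. -/
noncomputable def pd1 {N : ℕ} (f : ℝ × ℝ → Matrix (Fin N) (Fin N) ℂ) (p : ℝ × ℝ) :
    Matrix (Fin N) (Fin N) ℂ :=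
  Matrix.of fun i j => fderiv ℝ (fun q => f q i j) p (1, 0)

/-- Entrywise partial derivative of a matrix family in the second real coordinate. -/
noncomputable def pd2 {N : ℕ} (f : ℝ × ℝ → Matrix (Fin N) (Fin N) ℂ) (p : ℝ × ℝ) :
    Matrix (Fin N) (Fin N) ℂ :=
  Matrix.of fun i j => fderiv ℝ (fun q => f q i j) p (0, 1)

/-- `∂₊ = (∂₁ - i∂₂)/2` for matrix families. -/
noncomputable def pdp {N : ℕ} (f : ℝ × ℝ → Matrix (Fin N) (Fin N) ℂ) (p : ℝ × ℝ) :
    Matrix (Fin N) (Fin N) ℂ :=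
  ((1 : ℂ) / 2) • (pd1 f p - Complex.I • pd2 f p)

/-- `∂₋ = (∂₁ + i∂₂)/2` for matrix families. -/
noncomputable def pdm {N : ℕ} (f : ℝ × ℝ → Matrix (Fin N) (Fin N) ℂ) (p : ℝ × ℝ) :
    Matrix (Fin N) (Fin N) ℂ :=
  ((1 : ℂ) / 2) • (pd1 f p + Complex.I • pd2 f p)

open Complex in
/-- The Veronese holomorphic vector `v(ξ) = (1, √2 ξ, ξ²)ᵀ`. -/
noncomputable def veroneseVec (ξ : ℂ) : Fin 3 → ℂ :=
  ![1, (Real.sqrt 2 : ℂ) * ξ, ξ ^ 2]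

/-- The coordinate `ξ = ξ₁ + iξ₂`. -/
noncomputable def zeta (p : ℝ × ℝ) : ℂ := (p.1 : ℂ) + (p.2 : ℂ) * Complex.I

/-- The Veronese rank-1 projector family on `ℂP²`. -/
noncomputable def veroneseP (p : ℝ × ℝ) : Matrix (Fin 3) (Fin 3) ℂ :=
  (((1 + ‖zeta p‖ ^ 2 : ℝ) ^ 2 : ℝ) : ℂ)⁻¹ •
    Matrix.vecMulVec (veroneseVec (zeta p)) (star (veroneseVec (zeta p)))

/- ### auxiliary machinery -/

noncomputable def LZ : ℝ × ℝ →L[ℝ] ℂ :=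
  Complex.ofRealCLM.comp (ContinuousLinearMap.fst ℝ ℝ ℝ) +
    Complex.I • Complex.ofRealCLM.comp (ContinuousLinearMap.snd ℝ ℝ ℝ)

noncomputable def LW : ℝ × ℝ →L[ℝ] ℂ :=
  Complex.ofRealCLM.comp (ContinuousLinearMap.fst ℝ ℝ ℝ) -
    Complex.I • Complex.ofRealCLM.comp (ContinuousLinearMap.snd ℝ ℝ ℝ)

lemma hasFDerivAt_zeta (p : ℝ × ℝ) : HasFDerivAt zeta LZ p := by
  have : zeta = ⇑LZ := by funext q; simp [zeta, LZ]; ring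
  rw [this]; exact LZ.hasFDerivAt

lemma hasFDerivAt_zetabar (p : ℝ × ℝ) :
    HasFDerivAt (fun q => (starRingEnd ℂ) (zeta q)) LW p := by
  have : (fun q => (starRingEnd ℂ) (zeta q)) = ⇑LW := by funext q; simp [zeta, LW]; ring
  rw [this]; exact LW.hasFDerivAt

lemma myPow {f : ℝ × ℝ → ℂ} {f' : ℝ × ℝ →L[ℝ] ℂ} {x : ℝ × ℝ}
    (hf : HasFDerivAt f f' x) (n : ℕ) :
    HasFDerivAt (fun y => f y ^ n) (((n : ℂ) * f x ^ (n - 1)) • f') x := by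
  induction n with
  | zero =>
    have e : (((0 : ℕ) : ℂ) * f x ^ (0 - 1)) • f' = (0 : ℝ × ℝ →L[ℝ] ℂ) := by
      refine ContinuousLinearMap.ext fun u => ?_; simp
    rw [e, show (fun y => f y ^ 0) = fun _ : ℝ × ℝ => (1 : ℂ) by funext y; rw [pow_zero]]
    exact hasFDerivAt_const (1 : ℂ) x
  | succ n ih =>
    have h : HasFDerivAt (fun y => f y ^ n * f y) _ x := ih.mul hf
    have heq : (fun y => f y ^ n * f y) = fun y => f y ^ (n + 1) := by
      funext y; rw [pow_succ]
    rw [heq] at h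
    have e : (((n + 1 : ℕ) : ℂ) * f x ^ (n + 1 - 1)) • f'
        = f x ^ n • f' + f x • (((n : ℕ) : ℂ) * f x ^ (n - 1)) • f' := by
      refine ContinuousLinearMap.ext fun u => ?_
      simp only [ContinuousLinearMap.add_apply, ContinuousLinearMap.smul_apply, smul_eq_mul]
      match n with
      | 0 => simp
      | (m + 1) => push_cast; ring_nf
    rw [e]
    exact h

noncomputable def F (c : ℂ) (a b : ℕ) (q : ℝ × ℝ) : ℂ :=
  c * zeta q ^ a * (starRingEnd ℂ) (zeta q) ^ b *
    ((1 + zeta q * (starRingEnd ℂ) (zeta q)) ^ 2)⁻¹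

lemma s_ne (p : ℝ × ℝ) : (1 + zeta p * (starRingEnd ℂ) (zeta p)) ≠ 0 := by
  rw [Complex.mul_conj]
  intro h
  have := congrArg Complex.re h
  simp at this
  nlinarith [Complex.normSq_nonneg (zeta p), this]

lemma fderiv_F (c : ℂ) (a b : ℕ) (p : ℝ × ℝ) (u : ℝ × ℝ) :
    fderiv ℝ (F c a b) p u =
      (c * ((a : ℂ) * zeta p ^ (a - 1) * ((u.1 : ℂ) + (u.2 : ℂ) * Complex.I)) *
            (starRingEnd ℂ) (zeta p) ^ b
          + c * zeta p ^ a *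
            ((b : ℂ) * (starRingEnd ℂ) (zeta p) ^ (b - 1) *
              ((u.1 : ℂ) - (u.2 : ℂ) * Complex.I))) *
          ((1 + zeta p * (starRingEnd ℂ) (zeta p)) ^ 2)⁻¹
        - c * zeta p ^ a * (starRingEnd ℂ) (zeta p) ^ b *
          (2 * (1 + zeta p * (starRingEnd ℂ) (zeta p)) *
            (((u.1 : ℂ) + (u.2 : ℂ) * Complex.I) * (starRingEnd ℂ) (zeta p)
              + zeta p * ((u.1 : ℂ) - (u.2 : ℂ) * Complex.I))) *
          (((1 + zeta p * (starRingEnd ℂ) (zeta p)) ^ 2) ^ 2)⁻¹ := by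
  have hz := hasFDerivAt_zeta p
  have hw := hasFDerivAt_zetabar p
  have hg := ((myPow hz a).const_mul c).mul (myPow hw b)
  have h1 : HasFDerivAt (fun q => 1 + zeta q * (starRingEnd ℂ) (zeta q))
      ((zeta p) • LW + ((starRingEnd ℂ) (zeta p)) • LZ) p := (hz.mul hw).const_add 1
  have hinv := (hasFDerivAt_inv' (𝕜 := ℝ) (R := ℂ)
      (pow_ne_zero 2 (s_ne p))).comp p (myPow h1 2)
  have hs : HasFDerivAt (fun q => ((1 + zeta q * (starRingEnd ℂ) (zeta q)) ^ 2)⁻¹) _ p := hinv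
  have hF := hg.mul hs
  have key : fderiv ℝ (F c a b) p = _ := HasFDerivAt.fderiv (f := F c a b) hF
  rw [key]
  simp only [ContinuousLinearMap.add_apply, ContinuousLinearMap.smul_apply,
    ContinuousLinearMap.coe_smul', Pi.smul_apply, smul_eq_mul, LZ, LW,
    ContinuousLinearMap.sub_apply, ContinuousLinearMap.comp_apply,
    ContinuousLinearMap.coe_fst', ContinuousLinearMap.coe_snd',
    Complex.ofRealCLM_apply, neg_smul, neg_mul, ContinuousLinearMap.neg_apply,
    ContinuousLinearMap.mulLeftRight_apply, Pi.mul_apply]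
  push_cast
  have hs := s_ne p
  field_simp
  ring

noncomputable def cf : Fin 3 → ℝ := ![1, Real.sqrt 2, 1]

lemma scalar_cast (p : ℝ × ℝ) :
    (((1 + ‖zeta p‖ ^ 2 : ℝ) ^ 2 : ℝ) : ℂ) =
      (1 + zeta p * (starRingEnd ℂ) (zeta p)) ^ 2 := by
  rw [Complex.mul_conj, Complex.sq_norm]
  push_cast
  ring

lemma veroneseP_eq_F (i j : Fin 3) :
    (fun q => veroneseP q i j) = F (((cf i * cf j : ℝ) : ℂ)) (i : ℕ) (j : ℕ) := by
  have h2 : ((Real.sqrt 2 : ℝ) : ℂ) ^ 2 = 2 := by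
    norm_cast
    rw [Real.sq_sqrt] <;> norm_num
  funext q
  show (((1 + ‖zeta q‖ ^ 2 : ℝ) ^ 2 : ℝ) : ℂ)⁻¹ *
      (veroneseVec (zeta q) i * star (veroneseVec (zeta q) j)) = _
  rw [scalar_cast]
  fin_cases i <;> fin_cases j <;>
    simp [F, veroneseVec, cf, _root_.map_mul, map_pow, Complex.conj_ofReal, h2] <;>
    ring_nf <;> simp [h2]

lemma pdp_entry (p : ℝ × ℝ) (i j : Fin 3) :
    pdp veroneseP p i j =
      ((cf i * cf j : ℝ) : ℂ) * ((i : ℕ) : ℂ) * zeta p ^ ((i : ℕ) - 1) *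
          (starRingEnd ℂ) (zeta p) ^ (j : ℕ) *
          ((1 + zeta p * (starRingEnd ℂ) (zeta p)) ^ 2)⁻¹
        - 2 * ((cf i * cf j : ℝ) : ℂ) * zeta p ^ (i : ℕ) *
          (starRingEnd ℂ) (zeta p) ^ ((j : ℕ) + 1) *
          (1 + zeta p * (starRingEnd ℂ) (zeta p)) *
          (((1 + zeta p * (starRingEnd ℂ) (zeta p)) ^ 2) ^ 2)⁻¹ := by
  show ((1 : ℂ) / 2) * (fderiv ℝ (fun q => veroneseP q i j) p (1, 0)
      - Complex.I * fderiv ℝ (fun q => veroneseP q i j) p (0, 1)) = _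
  rw [veroneseP_eq_F, fderiv_F, fderiv_F]
  push_cast
  ring_nf
  simp [Complex.I_sq]
  ring
lemma pdm_entry (p : ℝ × ℝ) (i j : Fin 3) :
    pdm veroneseP p i j =
      ((cf i * cf j : ℝ) : ℂ) * ((j : ℕ) : ℂ) * zeta p ^ (i : ℕ) *
          (starRingEnd ℂ) (zeta p) ^ ((j : ℕ) - 1) *
          ((1 + zeta p * (starRingEnd ℂ) (zeta p)) ^ 2)⁻¹
        - 2 * ((cf i * cf j : ℝ) : ℂ) * zeta p ^ ((i : ℕ) + 1) *
          (starRingEnd ℂ) (zeta p) ^ (j : ℕ) *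
          (1 + zeta p * (starRingEnd ℂ) (zeta p)) *
          (((1 + zeta p * (starRingEnd ℂ) (zeta p)) ^ 2) ^ 2)⁻¹ := by
  show ((1 : ℂ) / 2) * (fderiv ℝ (fun q => veroneseP q i j) p (1, 0)
      + Complex.I * fderiv ℝ (fun q => veroneseP q i j) p (0, 1)) = _
  rw [veroneseP_eq_F, fderiv_F, fderiv_F]
  push_cast
  ring_nf
  simp [Complex.I_sq]
  ring

lemma pdp_entry' (p : ℝ × ℝ) (i j : Fin 3) :
    pdp veroneseP p i j =
      (((cf i * cf j : ℝ) : ℂ) * ((i : ℕ) : ℂ) * zeta p ^ ((i : ℕ) - 1) *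
          (starRingEnd ℂ) (zeta p) ^ (j : ℕ) * (1 + zeta p * (starRingEnd ℂ) (zeta p))
        - 2 * ((cf i * cf j : ℝ) : ℂ) * zeta p ^ (i : ℕ) *
          (starRingEnd ℂ) (zeta p) ^ ((j : ℕ) + 1)) /
        (1 + zeta p * (starRingEnd ℂ) (zeta p)) ^ 3 := by
  rw [pdp_entry]
  have hs := s_ne p
  field_simp

lemma pdm_entry' (p : ℝ × ℝ) (i j : Fin 3) :
    pdm veroneseP p i j =
      (((cf i * cf j : ℝ) : ℂ) * ((j : ℕ) : ℂ) * zeta p ^ (i : ℕ) *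
          (starRingEnd ℂ) (zeta p) ^ ((j : ℕ) - 1) * (1 + zeta p * (starRingEnd ℂ) (zeta p))
        - 2 * ((cf i * cf j : ℝ) : ℂ) * zeta p ^ ((i : ℕ) + 1) *
          (starRingEnd ℂ) (zeta p) ^ (j : ℕ)) /
        (1 + zeta p * (starRingEnd ℂ) (zeta p)) ^ 3 := by
  rw [pdm_entry]
  have hs := s_ne p
  field_simp

set_option maxHeartbeats 1000000 in
lemma trace_eq (p : ℝ × ℝ) :
    Matrix.trace (pdp veroneseP p * pdm veroneseP p) =
      2 / ((1 + zeta p * (starRingEnd ℂ) (zeta p)) ^ 2) := by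
  have h2 : ((Real.sqrt 2 : ℝ) : ℂ) ^ 2 = 2 := by
    norm_cast; rw [Real.sq_sqrt] <;> norm_num
  have hs := s_ne p
  rw [Matrix.trace]
  simp only [Matrix.diag_apply, Matrix.mul_apply, Fin.sum_univ_three, pdp_entry', pdm_entry',
    div_mul_div_comm, ← add_div, ← pow_add]
  norm_num [cf, Matrix.cons_val_two, Matrix.tail_cons, Matrix.head_cons]
  rw [div_eq_div_iff (pow_ne_zero _ hs) (pow_ne_zero _ hs)]
  ring_nf
  simp only [h2]
  ring_nf

open MeasureTheory Real Set

set_option maxHeartbeats 1000000 in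
lemma radial : ∫ r in Set.Ioi (0:ℝ), r * (2 / (1 + r^2)^2) = 1 := by
  have hderiv : ∀ x ∈ Ici (0:ℝ), HasDerivAt (fun r : ℝ => -(1+r^2)⁻¹) (x * (2/(1+x^2)^2)) x := by
    intro x _
    have h1 : HasDerivAt (fun r : ℝ => 1 + r^2) (2*x) x := by
      simpa using ((hasDerivAt_pow 2 x).const_add 1)
    have h2 := (h1.inv (by positivity)).neg
    refine h2.congr_deriv ?_
    ring
  have hpos : ∀ x ∈ Ioi (0:ℝ), 0 ≤ x * (2/(1+x^2)^2) := by
    intro x hx; have : (0:ℝ) < x := hx; positivity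
  have htend : Filter.Tendsto (fun r : ℝ => -(1+r^2)⁻¹) Filter.atTop (nhds 0) := by
    have h1 : Filter.Tendsto (fun r : ℝ => 1 + r^2) Filter.atTop Filter.atTop :=
      Filter.tendsto_atTop_add_const_left _ 1 (Filter.tendsto_pow_atTop two_ne_zero)
    simpa using h1.inv_tendsto_atTop.neg
  have := integral_Ioi_of_hasDerivAt_of_nonneg' hderiv hpos htend
  rw [this]
  norm_num

lemma angular : ∫ _θ in Set.Ioo (-π) π, (1:ℝ) = 2 * π := by
  simp [Real.pi_pos.le]
  ring

lemma action_integral : ∫ p : ℝ × ℝ, 2 / (1 + p.1^2 + p.2^2)^2 = 2 * π := by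
  rw [← integral_comp_polarCoord_symm (fun p : ℝ × ℝ => 2 / (1 + p.1^2 + p.2^2)^2)]
  have key : ∀ p : ℝ × ℝ, p.1 • (2 / (1 + (polarCoord.symm p).1^2 + (polarCoord.symm p).2^2)^2)
      = (fun r => r * (2/(1+r^2)^2)) p.1 * (fun _ : ℝ => (1:ℝ)) p.2 := by
    intro p
    rw [show polarCoord.symm p = (p.1 * cos p.2, p.1 * sin p.2) from rfl]
    have : (p.1 * cos p.2)^2 + (p.1 * sin p.2)^2 = p.1^2 := by
      rw [mul_pow, mul_pow, ← mul_add, Real.cos_sq_add_sin_sq]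
      ring
    simp only [smul_eq_mul]
    rw [show 1 + (p.1 * cos p.2)^2 + (p.1 * sin p.2)^2 = 1 + p.1^2 by rw [add_assoc, this]]
    ring
  simp_rw [key]
  rw [show polarCoord.target = Set.Ioi (0:ℝ) ×ˢ Set.Ioo (-π) π from rfl,
    MeasureTheory.Measure.volume_eq_prod]
  have hprod := setIntegral_prod_mul (μ := (volume : Measure ℝ)) (ν := (volume : Measure ℝ))
    (fun r : ℝ => r * (2/(1+r^2)^2)) (fun _ : ℝ => (1:ℝ)) (Set.Ioi 0) (Set.Ioo (-π) π)
  rw [radial, angular] at hprod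
  simpa using hprod

/-- The Lagrangian density of the Veronese projector equals `2/(1+|ξ|²)²` and its total
integral (the action) equals `2π`. -/
theorem veronese_lagrangian_and_action :
    (∀ p : ℝ × ℝ,
        Matrix.trace (pdp veroneseP p * pdm veroneseP p) =
          (2 : ℂ) / (((1 + ‖zeta p‖ ^ 2 : ℝ) ^ 2 : ℝ) : ℂ)) ∧
      ∫ p : ℝ × ℝ, (Matrix.trace (pdp veroneseP p * pdm veroneseP p)).re =
        2 * Real.pi := by
  have habs : ∀ p : ℝ × ℝ, ‖zeta p‖ ^ 2 = p.1 ^ 2 + p.2 ^ 2 := by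
    intro p
    rw [Complex.sq_norm, Complex.normSq_apply]
    simp [zeta]
    ring
  have hre : ∀ p : ℝ × ℝ, (Matrix.trace (pdp veroneseP p * pdm veroneseP p)).re =
      2 / (1 + p.1 ^ 2 + p.2 ^ 2) ^ 2 := by
    intro p
    rw [trace_eq, ← scalar_cast p, habs p]
    rw [show (2 : ℂ) / ((((1 + (p.1 ^ 2 + p.2 ^ 2)) ^ 2 : ℝ)) : ℂ)
        = ((2 / (1 + p.1 ^ 2 + p.2 ^ 2) ^ 2 : ℝ) : ℂ) by push_cast; ring]
    rw [Complex.ofReal_re]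
  constructor
  · intro p
    rw [trace_eq, scalar_cast]
  · rw [MeasureTheory.integral_congr_ae (Filter.Eventually.of_forall hre)]
    exact action_integral
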